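/- Let m, r, r', b, d be natural numbers with r = 2r', r' ≥ 4, d ≤ 3, r ≤ m, and b + d ≤ m. Then, as real numbers, C(m − b − d, r − d) / C(m, r) ≤ 64 · exp(−(r·b)/(2m)) · C(m − b − d, r' − d) / C(m, r'). -/

import Mathlib

lemma castDF_prod (n k : ℕ) (h : k ≤ n) :
    ((Nat.descFactorial n k : ℕ) : ℝ) = ∏ i ∈ Finset.range k, ((n : ℝ) - i) := by
  rw [Nat.descFactorial_eq_prod_range, Nat.cast_prod]
  exact Finset.prod_congr rfl fun i hi =>
    Nat.cast_sub (le_trans (le_of_lt (Finset.mem_range.mp hi)) h)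

lemma aux_P2 (x : ℝ) (hx : 4 ≤ x) (d : ℕ) (hd : d ≤ 3) :
    ∏ i ∈ Finset.range d, (2 * x - (i : ℝ)) ≤ 64 * ∏ i ∈ Finset.range d, (x - (i : ℝ)) := by
  interval_cases d
  · norm_num
  · simp only [Finset.prod_range_succ, Finset.prod_range_zero]
    push_cast
    nlinarith
  · simp only [Finset.prod_range_succ, Finset.prod_range_zero]
    push_cast
    nlinarith
  · simp only [Finset.prod_range_succ, Finset.prod_range_zero]
    push_cast
    nlinarith [mul_nonneg (mul_nonneg (by linarith : (0:ℝ) ≤ x)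
      (by linarith : (0:ℝ) ≤ 14 * x - 31)) (by linarith : (0:ℝ) ≤ x - 1)]

/-- Combinatorial core of the Chazelle–Friedman bound: for
`r = 2r'` with `r' ≥ 4` and `d ≤ 3`, the probability that a uniformly random
`r`-subset of an `m`-set contains a fixed `d`-subset and avoids a fixed
disjoint `b`-subset is at most `64 e^{-rb/(2m)}` times the corresponding
probability for an `r'`-subset. -/
theorem chazelle_friedman_choose_bound
    (m r r' b d : ℕ) (h2 : r = 2 * r') (hr' : 4 ≤ r') (hd : d ≤ 3)
    (hrm : r ≤ m) (hbd : b + d ≤ m) :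
    (Nat.choose (m - b - d) (r - d) : ℝ) / (Nat.choose m r : ℝ) ≤
      64 * Real.exp (-((r : ℝ) * (b : ℝ)) / (2 * (m : ℝ))) *
        ((Nat.choose (m - b - d) (r' - d) : ℝ) / (Nat.choose m r' : ℝ)) := by
  have hd'r : d ≤ r' := by omega
  have hdr : d ≤ r := by omega
  have hr'm : r' ≤ m := by omega
  by_cases hm : r + b ≤ m
  swap
  · -- then m - b - d < r - d so the LHS numerator is zero
    have h0 : m - b - d < r - d := by omega
    rw [Nat.choose_eq_zero_of_lt h0]
    push_cast
    rw [zero_div]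
    positivity
  -- main case
  set n := m - b - d with hn
  have hnr : r - d ≤ n := by omega
  have hnr' : r' - d ≤ n := by omega
  have hB : (0 : ℝ) < Nat.choose m r := by exact_mod_cast Nat.choose_pos hrm
  have hE : (0 : ℝ) < Nat.choose m r' := by exact_mod_cast Nat.choose_pos hr'm
  set ee : ℝ := Real.exp (-((r : ℝ) * (b : ℝ)) / (2 * (m : ℝ))) with hee
  have heq : (64 : ℝ) * ee * ((Nat.choose n (r' - d) : ℝ) / (Nat.choose m r' : ℝ))
      = (64 * ee * (Nat.choose n (r' - d) : ℝ)) / (Nat.choose m r' : ℝ) := by ring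
  rw [heq, div_le_div_iff₀ hB hE]
  -- goal : a * E ≤ 64 * ee * c * B
  have hm0 : (0 : ℝ) < m := by exact_mod_cast (by omega : 0 < m)
  have hrr : (r : ℝ) = 2 * (r' : ℝ) := by exact_mod_cast h2
  have hr4 : (4 : ℝ) ≤ (r' : ℝ) := by exact_mod_cast hr'
  have hnR : ((n : ℕ) : ℝ) = (m : ℝ) - b - d := by
    rw [hn]
    push_cast [Nat.cast_sub (by omega : b ≤ m), Nat.cast_sub (by omega : d ≤ m - b)]
    ring
  set T1 : ℝ := ∏ j ∈ Finset.range r', ((n : ℝ) - (((r' - d) + j : ℕ) : ℝ)) with hT1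
  set T2 : ℝ := ∏ j ∈ Finset.range r', ((m : ℝ) - ((r' + j : ℕ) : ℝ)) with hT2
  set D1 : ℝ := ∏ i ∈ Finset.range d, ((r : ℝ) - i) with hD1
  set D2 : ℝ := ∏ i ∈ Finset.range d, ((r' : ℝ) - i) with hD2
  set Q1 : ℝ := ∏ i ∈ Finset.range (r' - d), ((n : ℝ) - i) with hQ1
  set Q2 : ℝ := ∏ i ∈ Finset.range r', ((m : ℝ) - i) with hQ2
  have hQ1nn : (0 : ℝ) ≤ Q1 := by
    apply Finset.prod_nonneg
    intro i hi
    have hi1 : i < r' - d := Finset.mem_range.mp hi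
    have : (i : ℝ) ≤ (n : ℝ) := by exact_mod_cast (by omega : i ≤ n)
    linarith
  have hQ2nn : (0 : ℝ) ≤ Q2 := by
    apply Finset.prod_nonneg
    intro i hi
    have hi1 : i < r' := Finset.mem_range.mp hi
    have : (i : ℝ) ≤ (m : ℝ) := by exact_mod_cast (by omega : i ≤ m)
    linarith
  have hT1nn : ∀ j ∈ Finset.range r', (0 : ℝ) ≤ (n : ℝ) - (((r' - d) + j : ℕ) : ℝ) := by
    intro j hj
    have hj1 : j < r' := Finset.mem_range.mp hj
    have : (((r' - d) + j : ℕ) : ℝ) ≤ (n : ℝ) := by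
      exact_mod_cast (by omega : (r' - d) + j ≤ n)
    linarith
  have hT2nn : ∀ j ∈ Finset.range r', (0 : ℝ) ≤ (m : ℝ) - ((r' + j : ℕ) : ℝ) := by
    intro j hj
    have hj1 : j < r' := Finset.mem_range.mp hj
    have : ((r' + j : ℕ) : ℝ) ≤ (m : ℝ) := by exact_mod_cast (by omega : r' + j ≤ m)
    linarith
  have hD1nn : (0 : ℝ) ≤ D1 := by
    apply Finset.prod_nonneg
    intro i hi
    have hi1 : i < d := Finset.mem_range.mp hi
    have : (i : ℝ) ≤ (r : ℝ) := by exact_mod_cast (by omega : i ≤ r)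
    linarith
  have hD2nn : (0 : ℝ) ≤ D2 := by
    apply Finset.prod_nonneg
    intro i hi
    have hi1 : i < d := Finset.mem_range.mp hi
    have : (i : ℝ) ≤ (r' : ℝ) := by exact_mod_cast (by omega : i ≤ r')
    linarith
  -- P1 : T1 ≤ ee * T2
  have P1 : T1 ≤ ee * T2 := by
    have step : T1 ≤ ∏ j ∈ Finset.range r',
        Real.exp (-(b : ℝ) / m) * ((m : ℝ) - ((r' + j : ℕ) : ℝ)) := by
      apply Finset.prod_le_prod hT1nn
      intro j hj
      have hj1 : j < r' := Finset.mem_range.mp hj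
      have hjR : (j : ℝ) < (r' : ℝ) := by exact_mod_cast hj1
      have hcast : (((r' - d) + j : ℕ) : ℝ) = (r' : ℝ) - d + j := by
        push_cast [Nat.cast_sub hd'r]
        ring
      rw [hcast, hnR]
      have hexp : 1 - (b : ℝ) / m ≤ Real.exp (-(b : ℝ) / m) := by
        have h := Real.add_one_le_exp (-((b : ℝ) / m))
        rw [neg_div]
        linarith
      have hfac : (0 : ℝ) ≤ (m : ℝ) - ((r' : ℝ) + j) := by
        have : ((r' : ℝ) + j) ≤ (m : ℝ) := by exact_mod_cast (by omega : r' + j ≤ m)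
        linarith
      have hb0 : (0 : ℝ) ≤ (b : ℝ) := by positivity
      have key : (m : ℝ) - b - d - ((r' : ℝ) - d + j)
          ≤ (1 - (b : ℝ) / m) * ((m : ℝ) - ((r' : ℝ) + j)) := by
        have expand : (1 - (b : ℝ) / m) * ((m : ℝ) - ((r' : ℝ) + j))
            - ((m : ℝ) - b - d - ((r' : ℝ) - d + j))
            = (b : ℝ) * ((r' : ℝ) + j) / m := by
          field_simp
          ring
        have pos : (0 : ℝ) ≤ (b : ℝ) * ((r' : ℝ) + j) / m := by positivity
        linarith
      calc (m : ℝ) - b - d - ((r' : ℝ) - d + j)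
          ≤ (1 - (b : ℝ) / m) * ((m : ℝ) - ((r' : ℝ) + j)) := key
        _ ≤ Real.exp (-(b : ℝ) / m) * ((m : ℝ) - ((r' : ℝ) + j)) :=
            mul_le_mul_of_nonneg_right hexp hfac
        _ = Real.exp (-(b : ℝ) / m) * ((m : ℝ) - ((r' + j : ℕ) : ℝ)) := by push_cast; ring
    calc T1 ≤ ∏ j ∈ Finset.range r',
          Real.exp (-(b : ℝ) / m) * ((m : ℝ) - ((r' + j : ℕ) : ℝ)) := step
      _ = (Real.exp (-(b : ℝ) / m)) ^ r' * T2 := by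
          rw [Finset.prod_mul_distrib, Finset.prod_const, Finset.card_range]
      _ = ee * T2 := by
          congr 1
          rw [← Real.exp_nat_mul, hee]
          congr 1
          rw [hrr]
          field_simp
  -- P2 : D1 ≤ 64 * D2
  have P2 : D1 ≤ 64 * D2 := by
    rw [hD1, hD2]
    simp only [hrr]
    exact aux_P2 (r' : ℝ) hr4 d hd
  -- identities involving descFactorial
  have e1 : ((Nat.descFactorial n (r - d) : ℕ) : ℝ)
      = ((r - d).factorial : ℝ) * (Nat.choose n (r - d) : ℝ) := by
    exact_mod_cast congrArg (Nat.cast (R := ℝ)) (Nat.descFactorial_eq_factorial_mul_choose n (r - d))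
  have e2 : ((Nat.descFactorial m r' : ℕ) : ℝ)
      = (r'.factorial : ℝ) * (Nat.choose m r' : ℝ) := by
    exact_mod_cast congrArg (Nat.cast (R := ℝ)) (Nat.descFactorial_eq_factorial_mul_choose m r')
  have e3 : ((Nat.descFactorial n (r' - d) : ℕ) : ℝ)
      = ((r' - d).factorial : ℝ) * (Nat.choose n (r' - d) : ℝ) := by
    exact_mod_cast congrArg (Nat.cast (R := ℝ)) (Nat.descFactorial_eq_factorial_mul_choose n (r' - d))
  have e4 : ((Nat.descFactorial m r : ℕ) : ℝ)
      = (r.factorial : ℝ) * (Nat.choose m r : ℝ) := by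
    exact_mod_cast congrArg (Nat.cast (R := ℝ)) (Nat.descFactorial_eq_factorial_mul_choose m r)
  have e5 : ((r - d).factorial : ℝ) * ((Nat.descFactorial r d : ℕ) : ℝ) = (r.factorial : ℝ) := by
    exact_mod_cast congrArg (Nat.cast (R := ℝ)) (Nat.factorial_mul_descFactorial hdr)
  have e6 : ((r' - d).factorial : ℝ) * ((Nat.descFactorial r' d : ℕ) : ℝ)
      = (r'.factorial : ℝ) := by
    exact_mod_cast congrArg (Nat.cast (R := ℝ)) (Nat.factorial_mul_descFactorial hd'r)
  -- product splittings
  have s1 : ((Nat.descFactorial n (r - d) : ℕ) : ℝ) = Q1 * T1 := by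
    rw [castDF_prod n (r - d) hnr, hQ1, hT1,
      show r - d = (r' - d) + r' by omega, Finset.prod_range_add]
  have s2 : ((Nat.descFactorial m r : ℕ) : ℝ) = Q2 * T2 := by
    rw [castDF_prod m r hrm, hQ2, hT2, show r = r' + r' by omega, Finset.prod_range_add]
  have s3 : ((Nat.descFactorial n (r' - d) : ℕ) : ℝ) = Q1 := castDF_prod n (r' - d) hnr'
  have s4 : ((Nat.descFactorial m r' : ℕ) : ℝ) = Q2 := castDF_prod m r' hr'm
  have s5 : ((Nat.descFactorial r d : ℕ) : ℝ) = D1 := castDF_prod r d hdr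
  have s6 : ((Nat.descFactorial r' d : ℕ) : ℝ) = D2 := castDF_prod r' d hd'r
  -- the main descFactorial inequality
  have main : Q1 * T1 * Q2 * D1 ≤ 64 * ee * (Q1 * (Q2 * T2) * D2) := by
    have hT1nn' : (0 : ℝ) ≤ T1 := Finset.prod_nonneg hT1nn
    have hT2nn' : (0 : ℝ) ≤ T2 := Finset.prod_nonneg hT2nn
    have heenn : (0 : ℝ) ≤ ee := le_of_lt (Real.exp_pos _)
    have key : T1 * D1 ≤ (ee * T2) * (64 * D2) :=
      mul_le_mul P1 P2 hD1nn (by positivity)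
    calc Q1 * T1 * Q2 * D1 = (Q1 * Q2) * (T1 * D1) := by ring
      _ ≤ (Q1 * Q2) * ((ee * T2) * (64 * D2)) :=
          mul_le_mul_of_nonneg_left key (mul_nonneg hQ1nn hQ2nn)
      _ = 64 * ee * (Q1 * (Q2 * T2) * D2) := by ring
  -- put everything together
  have hfacpos : (0 : ℝ) < (r.factorial : ℝ) * (r'.factorial : ℝ) := by
    have h1 : (0 : ℝ) < (r.factorial : ℝ) := by exact_mod_cast r.factorial_pos
    have h2 : (0 : ℝ) < (r'.factorial : ℝ) := by exact_mod_cast r'.factorial_pos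
    positivity
  have lhs_eq : (r.factorial : ℝ) * (r'.factorial : ℝ)
        * ((Nat.choose n (r - d) : ℝ) * (Nat.choose m r' : ℝ))
      = Q1 * T1 * Q2 * D1 := by
    rw [← s1, ← s4, ← s5, e1, e2, ← e5]
    ring
  have rhs_eq : (r.factorial : ℝ) * (r'.factorial : ℝ)
        * (64 * ee * (Nat.choose n (r' - d) : ℝ) * (Nat.choose m r : ℝ))
      = 64 * ee * (Q1 * (Q2 * T2) * D2) := by
    rw [← s3, ← s2, ← s6, e3, e4, ← e6]
    ring
  have final : (r.factorial : ℝ) * (r'.factorial : ℝ)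
        * ((Nat.choose n (r - d) : ℝ) * (Nat.choose m r' : ℝ))
      ≤ (r.factorial : ℝ) * (r'.factorial : ℝ)
        * (64 * ee * (Nat.choose n (r' - d) : ℝ) * (Nat.choose m r : ℝ)) := by
    rw [lhs_eq, rhs_eq]; exact main
  exact le_of_mul_le_mul_left final hfacpos
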